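/- For every real α with 0 < α < 1/2 there exists a constant C > 0 such that for every measurable function g : (0,∞) → ℂ with ∫_0^∞ ν^{2α+2}|g(ν)|² dν finite, one has ∑_{n=1}^∞ | ∫_{n+1}^∞ ν·g(ν)/(ν − n) dν |² ≤ C · ∫_0^∞ ν^{2α+2} |g(ν)|² dν. -/

import Mathlib

open MeasureTheory Real

open Set
open scoped ENNReal NNReal

-- Bernoulli / MVT step
lemma rpow_sub_one_le_aux {β y : ℝ} (hβ0 : 0 < β) (hβ1 : β < 1) (hy : 1 < y) :
    y ^ (β - 1) ≤ (1/β) * (y ^ β - (y - 1) ^ β) := by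
  have h0 : (0:ℝ) < y - 1 := by linarith
  have hy0 : (0:ℝ) < y := by linarith
  have hle : y - 1 ≤ y := by linarith
  have hint : ∫ t in (y-1)..y, t ^ (β - 1) = (y ^ β - (y-1) ^ β) / β := by
    rw [integral_rpow (Or.inl (by linarith))]
    norm_num
  have hmono : ∫ _t in (y-1)..y, y ^ (β - 1) ≤ ∫ t in (y-1)..y, t ^ (β - 1) := by
    apply intervalIntegral.integral_mono_on hle intervalIntegrable_const
      (intervalIntegral.intervalIntegrable_rpow' (by linarith))
    intro t ht
    exact Real.rpow_le_rpow_of_nonpos (by linarith [ht.1]) ht.2 (by linarith)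
  rw [intervalIntegral.integral_const, hint] at hmono
  have : (y - (y-1)) • y ^ (β-1) = y ^ (β-1) := by
    norm_num
  rw [this] at hmono
  rw [one_div]
  calc y ^ (β-1) ≤ (y ^ β - (y-1)^β)/β := hmono
    _ = β⁻¹ * (y ^ β - (y-1)^β) := by ring

-- tail integral
lemma lintegral_tail_aux {β : ℝ} (hβ0 : 0 < β) (N : ℝ) :
    ∫⁻ ν in Set.Ioi (N+1), ENNReal.ofReal ((ν - N) ^ (-β - 1)) = ENNReal.ofReal (1/β) := by
  have h1 : ∫⁻ ν in Set.Ioi (N+1), ENNReal.ofReal ((ν - N) ^ (-β-1))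
      = ∫⁻ t in Set.Ioi (1:ℝ), ENNReal.ofReal (t ^ (-β-1)) := by
    rw [← lintegral_indicator measurableSet_Ioi, ← lintegral_indicator measurableSet_Ioi]
    have heq : ∀ ν : ℝ, (Set.Ioi (N+1)).indicator
          (fun ν => ENNReal.ofReal ((ν - N) ^ (-β-1))) ν
        = (Set.Ioi (1:ℝ)).indicator (fun t => ENNReal.ofReal (t ^ (-β-1))) (ν - N) := by
      intro ν
      by_cases h : N + 1 < ν
      · rw [Set.indicator_of_mem (Set.mem_Ioi.mpr h),
          Set.indicator_of_mem (Set.mem_Ioi.mpr (by linarith))]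
      · rw [Set.indicator_of_notMem (by simpa using h),
          Set.indicator_of_notMem (by simp; linarith [not_lt.mp h])]
    simp_rw [heq]
    exact lintegral_sub_right_eq_self
      (fun t => (Set.Ioi (1:ℝ)).indicator (fun t => ENNReal.ofReal (t ^ (-β-1))) t) N
  rw [h1, ← ofReal_integral_eq_lintegral_ofReal
      (integrableOn_Ioi_rpow_of_lt (by linarith) one_pos) ?_]
  · rw [integral_Ioi_rpow_of_lt (by linarith) one_pos]
    congr 1
    rw [show -β - 1 + 1 = -β by ring, Real.one_rpow]
    field_simp
  · filter_upwards [ae_restrict_mem measurableSet_Ioi] with t ht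
    exact Real.rpow_nonneg (by linarith [Set.mem_Ioi.mp ht]) _

lemma schur_sum_aux {β : ℝ} (hβ0 : 0 < β) (hβ1 : β < 1) (ν : ℝ) :
    (∑' n : ℕ+, (Set.Ioi ((n:ℝ)+1)).indicator
        (fun x => ENNReal.ofReal ((n:ℝ) ^ (-β) * (x ^ (-β) * (x - (n:ℝ)) ^ (β-1)))) ν)
      ≤ ENNReal.ofReal (1/β) := by
  by_cases hν : 2 < ν
  · have hν0 : (0:ℝ) < ν := by linarith
    set φ : ℕ → ℝ := fun k => (max (ν - k) 0) ^ β with hφ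
    set e : ℕ → ℝ≥0∞ := fun k =>
      ENNReal.ofReal (ν ^ (-β)) * ENNReal.ofReal ((1/β) * (φ k - φ (k+1))) with he
    have hφnn : ∀ k, 0 ≤ φ k := fun k => Real.rpow_nonneg (le_max_right _ _) _
    have hφmono : ∀ k : ℕ, φ (k+1) ≤ φ k := by
      intro k
      apply Real.rpow_le_rpow (le_max_right _ _) _ hβ0.le
      apply max_le_max _ le_rfl
      push_cast
      linarith
    have hterm : ∀ n : ℕ+, (Set.Ioi ((n:ℝ)+1)).indicator
        (fun x => ENNReal.ofReal ((n:ℝ) ^ (-β) * (x ^ (-β) * (x - (n:ℝ)) ^ (β-1)))) ν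
          ≤ e (n:ℕ) := by
      intro n
      by_cases h : ν ∈ Set.Ioi ((n:ℝ)+1)
      · rw [Set.indicator_of_mem h]
        have hn1 : (1:ℝ) ≤ (n:ℝ) := by exact_mod_cast n.one_le
        have hgt : (n:ℝ) + 1 < ν := Set.mem_Ioi.mp h
        have hd1 : (1:ℝ) < ν - (n:ℝ) := by linarith
        have hφn : φ (n:ℕ) = (ν - (n:ℝ)) ^ β := by
          simp only [hφ]
          rw [max_eq_left (by push_cast; linarith)]
        have hφn1 : φ ((n:ℕ)+1) = (ν - (n:ℝ) - 1) ^ β := by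
          simp only [hφ]
          rw [max_eq_left (by push_cast; linarith)]
          push_cast
          ring_nf
        have hb : (ν - (n:ℝ)) ^ (β-1) ≤ (1/β) * (φ (n:ℕ) - φ ((n:ℕ)+1)) := by
          rw [hφn, hφn1]
          exact rpow_sub_one_le_aux hβ0 hβ1 hd1
        have hone : (n:ℝ) ^ (-β) ≤ 1 :=
          Real.rpow_le_one_of_one_le_of_nonpos hn1 (by linarith)
        have hr : (n:ℝ) ^ (-β) * (ν ^ (-β) * (ν - (n:ℝ)) ^ (β-1))
            ≤ ν ^ (-β) * ((1/β) * (φ (n:ℕ) - φ ((n:ℕ)+1))) := by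
          have h1 : (n:ℝ) ^ (-β) * (ν ^ (-β) * (ν - (n:ℝ)) ^ (β-1))
              ≤ 1 * (ν ^ (-β) * (ν - (n:ℝ)) ^ (β-1)) := by
            apply mul_le_mul_of_nonneg_right hone
            exact mul_nonneg (Real.rpow_nonneg hν0.le _) (Real.rpow_nonneg (by linarith) _)
          rw [one_mul] at h1
          refine h1.trans ?_
          exact mul_le_mul_of_nonneg_left hb (Real.rpow_nonneg hν0.le _)
        calc ENNReal.ofReal ((n:ℝ) ^ (-β) * (ν ^ (-β) * (ν - (n:ℝ)) ^ (β-1)))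
            ≤ ENNReal.ofReal (ν ^ (-β) * ((1/β) * (φ (n:ℕ) - φ ((n:ℕ)+1)))) :=
              ENNReal.ofReal_le_ofReal hr
          _ = e (n:ℕ) := ENNReal.ofReal_mul (Real.rpow_nonneg hν0.le _)
      · rw [Set.indicator_of_notMem h]; exact zero_le
    calc (∑' n : ℕ+, (Set.Ioi ((n:ℝ)+1)).indicator
          (fun x => ENNReal.ofReal ((n:ℝ) ^ (-β) * (x ^ (-β) * (x - (n:ℝ)) ^ (β-1)))) ν)
        ≤ ∑' n : ℕ+, e (n:ℕ) := ENNReal.tsum_le_tsum hterm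
      _ ≤ ∑' k : ℕ, e k := ENNReal.tsum_comp_le_tsum_of_injective PNat.coe_injective e
      _ = ENNReal.ofReal (ν ^ (-β)) * ∑' k : ℕ, ENNReal.ofReal ((1/β) * (φ k - φ (k+1))) :=
          ENNReal.tsum_mul_left
      _ ≤ ENNReal.ofReal (ν ^ (-β)) * ENNReal.ofReal ((1/β) * φ 0) := by
          apply mul_le_mul_right
          apply ENNReal.tsum_le_of_sum_range_le
          intro m
          rw [← ENNReal.ofReal_sum_of_nonneg]
          · apply ENNReal.ofReal_le_ofReal
            rw [← Finset.mul_sum, Finset.sum_range_sub' φ m]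
            have := hφnn m
            have hβ' : 0 ≤ 1/β := by positivity
            nlinarith [hφnn 0]
          · intro i _
            have := hφmono i
            have hβ' : 0 ≤ 1/β := by positivity
            nlinarith
      _ ≤ ENNReal.ofReal (1/β) := by
          rw [← ENNReal.ofReal_mul (Real.rpow_nonneg hν0.le _)]
          apply ENNReal.ofReal_le_ofReal
          have hφ0 : φ 0 = ν ^ β := by
            simp only [hφ]
            rw [Nat.cast_zero, sub_zero, max_eq_left hν0.le]
          rw [hφ0]
          have hpow : ν ^ (-β) * ν ^ β = 1 := by
            rw [← Real.rpow_add hν0]; norm_num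
          apply le_of_eq
          rw [show ν ^ (-β) * (1/β * ν ^ β) = (1/β) * (ν ^ (-β) * ν ^ β) by ring, hpow, mul_one]
  · have hz : ∀ n : ℕ+, (Set.Ioi ((n:ℝ)+1)).indicator
        (fun x => ENNReal.ofReal ((n:ℝ) ^ (-β) * (x ^ (-β) * (x - (n:ℝ)) ^ (β-1)))) ν = 0 := by
      intro n
      apply Set.indicator_of_notMem
      have hn1 : (1:ℝ) ≤ (n:ℝ) := by exact_mod_cast n.one_le
      simp only [Set.mem_Ioi, not_lt]
      linarith [not_lt.mp hν]
    simp only [hz, tsum_zero]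
    exact zero_le

lemma key_aux {β : ℝ} (hβ0 : 0 < β) (hβ1 : β < 1) {g : ℝ → ℂ} (hg : Measurable g)
    {N : ℝ} (hN : 1 ≤ N) :
    ENNReal.ofReal (‖∫ ν in Set.Ioi (N + 1), (ν:ℂ) * g ν / ((ν - N : ℝ) : ℂ)‖ ^ 2)
      ≤ ENNReal.ofReal (1/β) * (ENNReal.ofReal (N ^ (-β)) *
          ∫⁻ ν in Set.Ioi (N+1),
            ENNReal.ofReal (ν ^ (-β) * (ν - N) ^ (β-1)) *
              ENNReal.ofReal (ν ^ (4*β+2) * ‖g ν‖ ^ 2)) := by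
  set s : Set ℝ := Set.Ioi (N+1) with hs
  set f : ℝ → ℂ := fun ν => (ν:ℂ) * g ν / ((ν - N : ℝ) : ℂ) with hf
  set p : ℝ → ℝ := fun ν => ν ^ (-(3*β)/2) * (ν - N) ^ ((β-1)/2) with hp
  set q : ℝ → ℝ := fun ν => ν ^ ((3*β+2)/2) * ((ν - N) ^ ((β-1)/2) * ‖g ν‖) with hq
  have hpm : Measurable fun ν => ENNReal.ofReal (p ν) :=
    ((measurable_id.pow_const _).mul
      ((measurable_id.sub measurable_const).pow_const _)).ennreal_ofReal
  have habs : Measurable fun ν => ‖g ν‖ :=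
    continuous_norm.measurable.comp hg
  have hqm : Measurable fun ν => ENNReal.ofReal (q ν) :=
    ((measurable_id.pow_const _).mul
      (((measurable_id.sub measurable_const).pow_const _).mul habs)).ennreal_ofReal
  -- Step A
  have hA : ENNReal.ofReal (‖∫ ν in s, f ν‖ ^ 2)
      ≤ (∫⁻ ν in s, ENNReal.ofReal ‖f ν‖) ^ 2 := by
    rw [ENNReal.ofReal_pow (norm_nonneg _)]
    exact pow_le_pow_left'
      (ENNReal.ofReal_le_of_le_toReal (norm_integral_le_lintegral_norm _)) 2
  -- Step B
  have hB : (∫⁻ ν in s, ENNReal.ofReal ‖f ν‖)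
      ≤ ∫⁻ ν in s, ENNReal.ofReal (p ν) * ENNReal.ofReal (q ν) := by
    apply setLIntegral_mono' measurableSet_Ioi
    intro ν hν
    have hν' : N + 1 < ν := hν
    have hν0 : (0:ℝ) < ν := by linarith
    have hd0 : (0:ℝ) < ν - N := by linarith
    have hd1 : (1:ℝ) ≤ ν - N := by linarith
    have hAnn : 0 ≤ ‖g ν‖ := norm_nonneg _
    have hnorm : ‖f ν‖ = ν * ‖g ν‖ * (ν - N)⁻¹ := by
      rw [hf]
      simp only [norm_div, norm_mul, Complex.norm_real, Real.norm_eq_abs]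
      rw [abs_of_pos hν0, abs_of_pos hd0]
      ring
    have e1 : ν ^ (-(3*β)/2) * ν ^ ((3*β+2)/2) = ν := by
      rw [← Real.rpow_add hν0, show -(3*β)/2 + (3*β+2)/2 = 1 by ring, Real.rpow_one]
    have e2 : (ν-N) ^ ((β-1)/2) * (ν-N) ^ ((β-1)/2) = (ν-N) ^ (β-1) := by
      rw [← Real.rpow_add hd0, show (β-1)/2 + (β-1)/2 = β-1 by ring]
    have e3 : (ν-N)⁻¹ ≤ (ν-N) ^ (β-1) := by
      rw [← Real.rpow_neg_one]
      exact Real.rpow_le_rpow_of_exponent_le hd1 (by linarith)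
    have hpq : ν * ‖g ν‖ * (ν - N)⁻¹ ≤ p ν * q ν := by
      have hqe : p ν * q ν = ν * (ν-N) ^ (β-1) * ‖g ν‖ := by
        rw [hp, hq]
        calc ν ^ (-(3*β)/2) * (ν - N) ^ ((β-1)/2)
              * (ν ^ ((3*β+2)/2) * ((ν - N) ^ ((β-1)/2) * ‖g ν‖))
            = (ν ^ (-(3*β)/2) * ν ^ ((3*β+2)/2))
              * ((ν-N) ^ ((β-1)/2) * (ν-N) ^ ((β-1)/2)) * ‖g ν‖ := by ring
          _ = ν * (ν-N) ^ (β-1) * ‖g ν‖ := by rw [e1, e2]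
      rw [hqe]
      calc ν * ‖g ν‖ * (ν - N)⁻¹
          ≤ ν * ‖g ν‖ * (ν-N) ^ (β-1) :=
            mul_le_mul_of_nonneg_left e3 (by positivity)
        _ = ν * (ν-N) ^ (β-1) * ‖g ν‖ := by ring
    have hpnn : 0 ≤ p ν := by
      rw [hp]
      exact mul_nonneg (Real.rpow_nonneg hν0.le _) (Real.rpow_nonneg hd0.le _)
    calc ENNReal.ofReal ‖f ν‖ = ENNReal.ofReal (ν * ‖g ν‖ * (ν - N)⁻¹) := by
          rw [hnorm]
      _ ≤ ENNReal.ofReal (p ν * q ν) := ENNReal.ofReal_le_ofReal hpq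
      _ = ENNReal.ofReal (p ν) * ENNReal.ofReal (q ν) := ENNReal.ofReal_mul hpnn
  -- Step C : Hölder
  have hconj : Real.HolderConjugate 2 2 := ⟨by norm_num, by norm_num, by norm_num⟩
  have hC := ENNReal.lintegral_mul_le_Lp_mul_Lq (volume.restrict s) hconj
    hpm.aemeasurable hqm.aemeasurable
  simp only [Pi.mul_apply] at hC
  -- Step D1
  have hD1 : ∫⁻ ν in s, ENNReal.ofReal (p ν) ^ (2:ℝ)
      ≤ ENNReal.ofReal (N ^ (-β)) * ENNReal.ofReal (1/β) := by
    have hstep : ∫⁻ ν in s, ENNReal.ofReal (p ν) ^ (2:ℝ)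
        ≤ ∫⁻ ν in s, ENNReal.ofReal (N ^ (-β)) * ENNReal.ofReal ((ν - N) ^ (-β-1)) := by
      apply setLIntegral_mono' measurableSet_Ioi
      intro ν hν
      have hν' : N + 1 < ν := hν
      have hν0 : (0:ℝ) < ν := by linarith
      have hd0 : (0:ℝ) < ν - N := by linarith
      have hN0 : (0:ℝ) < N := by linarith
      have hpnn : 0 ≤ p ν := by
        rw [hp]
        exact mul_nonneg (Real.rpow_nonneg hν0.le _) (Real.rpow_nonneg hd0.le _)
      rw [ENNReal.ofReal_rpow_of_nonneg hpnn (by norm_num)]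
      have hp2 : p ν ^ (2:ℝ) = ν ^ (-(3*β)) * (ν - N) ^ (β-1) := by
        rw [hp]
        rw [Real.mul_rpow (Real.rpow_nonneg hν0.le _) (Real.rpow_nonneg hd0.le _),
          ← Real.rpow_mul hν0.le, ← Real.rpow_mul hd0.le,
          show -(3*β)/2*2 = -(3*β) by ring, show (β-1)/2*2 = β-1 by ring]
      have h3 : N ^ β * (ν - N) ^ (2*β) ≤ ν ^ (3*β) := by
        have b1 : N ^ β ≤ ν ^ β := Real.rpow_le_rpow hN0.le (by linarith) hβ0.le
        have b2 : (ν-N) ^ (2*β) ≤ ν ^ (2*β) :=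
          Real.rpow_le_rpow hd0.le (by linarith) (by linarith)
        calc N ^ β * (ν-N) ^ (2*β) ≤ ν ^ β * ν ^ (2*β) :=
              mul_le_mul b1 b2 (Real.rpow_nonneg hd0.le _) (Real.rpow_nonneg hν0.le _)
          _ = ν ^ (3*β) := by rw [← Real.rpow_add hν0]; ring_nf
      have h4 : ν ^ (-(3*β)) ≤ N ^ (-β) * (ν-N) ^ (-(2*β)) := by
        rw [Real.rpow_neg hν0.le, Real.rpow_neg hN0.le, Real.rpow_neg hd0.le, ← mul_inv]
        exact inv_anti₀ (by positivity) h3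
      have h5 : p ν ^ (2:ℝ) ≤ N ^ (-β) * (ν - N) ^ (-β-1) := by
        rw [hp2]
        calc ν ^ (-(3*β)) * (ν - N) ^ (β-1)
            ≤ N ^ (-β) * (ν-N) ^ (-(2*β)) * (ν - N) ^ (β-1) :=
              mul_le_mul_of_nonneg_right h4 (Real.rpow_nonneg hd0.le _)
          _ = N ^ (-β) * (ν - N) ^ (-β-1) := by
              rw [mul_assoc, ← Real.rpow_add hd0, show -(2*β)+(β-1) = -β-1 by ring]
      calc ENNReal.ofReal (p ν ^ (2:ℝ)) ≤ ENNReal.ofReal (N ^ (-β) * (ν - N) ^ (-β-1)) :=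
            ENNReal.ofReal_le_ofReal h5
        _ = ENNReal.ofReal (N ^ (-β)) * ENNReal.ofReal ((ν - N) ^ (-β-1)) :=
            ENNReal.ofReal_mul (Real.rpow_nonneg hN0.le _)
    rw [lintegral_const_mul' _ _ ENNReal.ofReal_ne_top, lintegral_tail_aux hβ0 N] at hstep
    exact hstep
  -- Step D2
  have hD2 : ∫⁻ ν in s, ENNReal.ofReal (q ν) ^ (2:ℝ)
      = ∫⁻ ν in s, ENNReal.ofReal (ν ^ (-β) * (ν - N) ^ (β-1)) *
          ENNReal.ofReal (ν ^ (4*β+2) * ‖g ν‖ ^ 2) := by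
    apply setLIntegral_congr_fun measurableSet_Ioi
    intro ν hν
    have hν' : N + 1 < ν := hν
    have hν0 : (0:ℝ) < ν := by linarith
    have hd0 : (0:ℝ) < ν - N := by linarith
    have hAnn : 0 ≤ ‖g ν‖ := norm_nonneg _
    have hqnn : 0 ≤ q ν := by
      rw [hq]
      exact mul_nonneg (Real.rpow_nonneg hν0.le _)
        (mul_nonneg (Real.rpow_nonneg hd0.le _) hAnn)
    beta_reduce
    rw [ENNReal.ofReal_rpow_of_nonneg hqnn (by norm_num),
      ← ENNReal.ofReal_mul (mul_nonneg (Real.rpow_nonneg hν0.le _) (Real.rpow_nonneg hd0.le _))]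
    congr 1
    have hq2 : q ν ^ (2:ℝ) = ν ^ (3*β+2) * ((ν - N) ^ (β-1) * ‖g ν‖ ^ 2) := by
      rw [hq]
      rw [Real.mul_rpow (Real.rpow_nonneg hν0.le _)
          (mul_nonneg (Real.rpow_nonneg hd0.le _) hAnn),
        Real.mul_rpow (Real.rpow_nonneg hd0.le _) hAnn,
        ← Real.rpow_mul hν0.le, ← Real.rpow_mul hd0.le,
        show (3*β+2)/2*2 = 3*β+2 by ring, show (β-1)/2*2 = β-1 by ring]
      rw [show (2:ℝ) = ((2:ℕ):ℝ) by norm_num, Real.rpow_natCast]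
    rw [hq2]
    rw [show ν ^ (-β) * (ν - N) ^ (β-1) * (ν ^ (4*β+2) * ‖g ν‖ ^ 2)
        = (ν ^ (-β) * ν ^ (4*β+2)) * ((ν - N) ^ (β-1) * ‖g ν‖ ^ 2) by ring,
      ← Real.rpow_add hν0, show -β + (4*β+2) = 3*β+2 by ring]
  -- squaring helper
  have hsq : ∀ x : ℝ≥0∞, (x ^ (1/(2:ℝ))) ^ (2:ℕ) = x := by
    intro x
    rw [← ENNReal.rpow_natCast (x ^ (1/(2:ℝ))) 2, ← ENNReal.rpow_mul]
    norm_num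
  -- assemble
  calc ENNReal.ofReal (‖∫ ν in s, f ν‖ ^ 2)
      ≤ (∫⁻ ν in s, ENNReal.ofReal ‖f ν‖) ^ 2 := hA
    _ ≤ (∫⁻ ν in s, ENNReal.ofReal (p ν) * ENNReal.ofReal (q ν)) ^ 2 :=
        pow_le_pow_left' hB 2
    _ ≤ ((∫⁻ ν in s, ENNReal.ofReal (p ν) ^ (2:ℝ)) ^ (1/(2:ℝ))
          * (∫⁻ ν in s, ENNReal.ofReal (q ν) ^ (2:ℝ)) ^ (1/(2:ℝ))) ^ 2 :=
        pow_le_pow_left' hC 2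
    _ = (∫⁻ ν in s, ENNReal.ofReal (p ν) ^ (2:ℝ))
          * (∫⁻ ν in s, ENNReal.ofReal (q ν) ^ (2:ℝ)) := by
        rw [mul_pow, hsq, hsq]
    _ ≤ (ENNReal.ofReal (N ^ (-β)) * ENNReal.ofReal (1/β))
          * ∫⁻ ν in s, ENNReal.ofReal (ν ^ (-β) * (ν - N) ^ (β-1)) *
              ENNReal.ofReal (ν ^ (4*β+2) * ‖g ν‖ ^ 2) := by
        rw [hD2]
        exact mul_le_mul_left hD1 _
    _ = ENNReal.ofReal (1/β) * (ENNReal.ofReal (N ^ (-β)) *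
          ∫⁻ ν in s, ENNReal.ofReal (ν ^ (-β) * (ν - N) ^ (β-1)) *
              ENNReal.ofReal (ν ^ (4*β+2) * ‖g ν‖ ^ 2)) := by
        ring

theorem tail_kernel_estimate (α : ℝ) (hα0 : 0 < α) (hα : α < 1/2) :
    ∃ C : ℝ, 0 < C ∧ ∀ g : ℝ → ℂ, Measurable g →
      (∫⁻ ν in Set.Ioi (0 : ℝ),
          ENNReal.ofReal (ν ^ (2 * α + 2) * ‖g ν‖ ^ 2)) < ⊤ →
      (∑' n : ℕ+, ENNReal.ofReal (‖
          (∫ ν in Set.Ioi ((n : ℝ) + 1),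
            (ν : ℂ) * g ν / ((ν - (n : ℝ) : ℝ) : ℂ))‖ ^ 2))
        ≤ ENNReal.ofReal C *
          ∫⁻ ν in Set.Ioi (0 : ℝ),
            ENNReal.ofReal (ν ^ (2 * α + 2) * ‖g ν‖ ^ 2) := by
  obtain ⟨β, hβdef⟩ : ∃ β : ℝ, β = α/2 := ⟨α/2, rfl⟩
  have hβ0 : 0 < β := by rw [hβdef]; linarith
  have hβ1 : β < 1 := by rw [hβdef]; linarith
  refine ⟨(1/β)*(1/β), by positivity, ?_⟩
  intro g hg _hfin
  rw [show 2*α+2 = 4*β+2 by rw [hβdef]; ring]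
  set G : ℝ → ℝ≥0∞ := fun ν => ENNReal.ofReal (ν ^ (4*β+2) * ‖g ν‖ ^ 2) with hG
  have habs : Measurable fun ν => ‖g ν‖ :=
    continuous_norm.measurable.comp hg
  have hGmeas : Measurable G :=
    ((measurable_id.pow_const _).mul (habs.pow_const 2)).ennreal_ofReal
  have hW : ∀ n : ℕ+, ENNReal.ofReal ((n:ℝ) ^ (-β)) * ∫⁻ ν in Set.Ioi ((n:ℝ)+1),
        ENNReal.ofReal (ν ^ (-β) * (ν - (n:ℝ)) ^ (β-1)) * G ν
      = ∫⁻ ν in Set.Ioi (0:ℝ), (Set.Ioi ((n:ℝ)+1)).indicator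
          (fun x => ENNReal.ofReal ((n:ℝ) ^ (-β) * (x ^ (-β) * (x - (n:ℝ)) ^ (β-1)))) ν
            * G ν := by
    intro n
    have hn1 : (1:ℝ) ≤ (n:ℝ) := by exact_mod_cast n.one_le
    have hsub : Set.Ioi ((n:ℝ)+1) ∩ Set.Ioi (0:ℝ) = Set.Ioi ((n:ℝ)+1) :=
      Set.inter_eq_self_of_subset_left (Set.Ioi_subset_Ioi (by linarith))
    calc ENNReal.ofReal ((n:ℝ) ^ (-β)) * ∫⁻ ν in Set.Ioi ((n:ℝ)+1),
          ENNReal.ofReal (ν ^ (-β) * (ν - (n:ℝ)) ^ (β-1)) * G ν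
        = ∫⁻ ν in Set.Ioi ((n:ℝ)+1), ENNReal.ofReal ((n:ℝ) ^ (-β)) *
            (ENNReal.ofReal (ν ^ (-β) * (ν - (n:ℝ)) ^ (β-1)) * G ν) := by
          rw [lintegral_const_mul' _ _ ENNReal.ofReal_ne_top]
      _ = ∫⁻ ν in Set.Ioi ((n:ℝ)+1),
            ENNReal.ofReal ((n:ℝ) ^ (-β) * (ν ^ (-β) * (ν - (n:ℝ)) ^ (β-1))) * G ν := by
          congr 1
          funext ν
          rw [ENNReal.ofReal_mul (Real.rpow_nonneg (show (0:ℝ) ≤ (n:ℝ) by linarith) (-β)),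
            mul_assoc]
      _ = ∫⁻ ν in Set.Ioi ((n:ℝ)+1) ∩ Set.Ioi (0:ℝ),
            ENNReal.ofReal ((n:ℝ) ^ (-β) * (ν ^ (-β) * (ν - (n:ℝ)) ^ (β-1))) * G ν := by
          rw [hsub]
      _ = ∫⁻ ν in Set.Ioi (0:ℝ), (Set.Ioi ((n:ℝ)+1)).indicator
            (fun x => ENNReal.ofReal ((n:ℝ) ^ (-β) * (x ^ (-β) * (x - (n:ℝ)) ^ (β-1))) * G x)
              ν := by
          rw [setLIntegral_indicator measurableSet_Ioi]
      _ = ∫⁻ ν in Set.Ioi (0:ℝ), (Set.Ioi ((n:ℝ)+1)).indicator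
            (fun x => ENNReal.ofReal ((n:ℝ) ^ (-β) * (x ^ (-β) * (x - (n:ℝ)) ^ (β-1)))) ν
              * G ν := by
          congr 1
          funext ν
          rw [Set.indicator_mul_left]
  have hWm : ∀ n : ℕ+, Measurable fun ν => (Set.Ioi ((n:ℝ)+1)).indicator
      (fun x => ENNReal.ofReal ((n:ℝ) ^ (-β) * (x ^ (-β) * (x - (n:ℝ)) ^ (β-1)))) ν * G ν := by
    intro n
    apply Measurable.mul _ hGmeas
    apply Measurable.indicator _ measurableSet_Ioi
    exact (measurable_const.mul ((measurable_id.pow_const _).mul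
      ((measurable_id.sub measurable_const).pow_const _))).ennreal_ofReal
  calc (∑' n : ℕ+, ENNReal.ofReal (‖
          (∫ ν in Set.Ioi ((n : ℝ) + 1), (ν : ℂ) * g ν / ((ν - (n : ℝ) : ℝ) : ℂ))‖ ^ 2))
      ≤ ∑' n : ℕ+, ENNReal.ofReal (1/β) * (ENNReal.ofReal ((n:ℝ) ^ (-β)) *
          ∫⁻ ν in Set.Ioi ((n:ℝ)+1),
            ENNReal.ofReal (ν ^ (-β) * (ν - (n:ℝ)) ^ (β-1)) * G ν) := by
        apply ENNReal.tsum_le_tsum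
        intro n
        exact key_aux hβ0 hβ1 hg (by exact_mod_cast n.one_le)
    _ = ENNReal.ofReal (1/β) * ∑' n : ℕ+, (ENNReal.ofReal ((n:ℝ) ^ (-β)) *
          ∫⁻ ν in Set.Ioi ((n:ℝ)+1),
            ENNReal.ofReal (ν ^ (-β) * (ν - (n:ℝ)) ^ (β-1)) * G ν) := ENNReal.tsum_mul_left
    _ = ENNReal.ofReal (1/β) * ∑' n : ℕ+, ∫⁻ ν in Set.Ioi (0:ℝ),
          (Set.Ioi ((n:ℝ)+1)).indicator
            (fun x => ENNReal.ofReal ((n:ℝ) ^ (-β) * (x ^ (-β) * (x - (n:ℝ)) ^ (β-1)))) ν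
              * G ν := by
        congr 1
        exact tsum_congr hW
    _ = ENNReal.ofReal (1/β) * ∫⁻ ν in Set.Ioi (0:ℝ), ∑' n : ℕ+,
          (Set.Ioi ((n:ℝ)+1)).indicator
            (fun x => ENNReal.ofReal ((n:ℝ) ^ (-β) * (x ^ (-β) * (x - (n:ℝ)) ^ (β-1)))) ν
              * G ν := by
        rw [← lintegral_tsum (fun n => (hWm n).aemeasurable)]
    _ ≤ ENNReal.ofReal (1/β) * ∫⁻ ν in Set.Ioi (0:ℝ), ENNReal.ofReal (1/β) * G ν := by
        apply mul_le_mul_right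
        apply lintegral_mono
        intro ν
        dsimp only
        rw [ENNReal.tsum_mul_right]
        exact mul_le_mul_left (schur_sum_aux hβ0 hβ1 ν) _
    _ = ENNReal.ofReal (1/β) * (ENNReal.ofReal (1/β) * ∫⁻ ν in Set.Ioi (0:ℝ), G ν) := by
        rw [lintegral_const_mul' _ _ ENNReal.ofReal_ne_top]
    _ = ENNReal.ofReal ((1/β)*(1/β)) * ∫⁻ ν in Set.Ioi (0:ℝ), G ν := by
        rw [ENNReal.ofReal_mul (by positivity), mul_assoc]
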